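/- Fix integers d1, d2 ≥ 1 with d1 ≥ 2 or d2 ≥ 2, and q ∈ (0,1]. Then there exists N ∈ ℕ such that for every n ≥ N the function f_n(p) = (φ_n(p))^{1/n} − 1/(d1·d2) is continuous and strictly increasing on [0,1] with f_n(0) < 0 < f_n(1), hence has a unique root p̃_n ∈ (0,1); moreover the sequence (p̃_n)_{n≥N} converges to the unique root p̃ ∈ (0,1) of f. -/

import Mathlib

/-- κ = (d1+1)(d2+1). -/
noncomputable def frogKappa (d1 d2 : ℕ) : ℝ := ((d1 : ℝ) + 1) * ((d2 : ℝ) + 1)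

/-- The discriminant Δ(p) = κ² − 2κ(d1+d2)p² + (d2−d1)²p⁴. -/
noncomputable def frogDelta (d1 d2 : ℕ) (p : ℝ) : ℝ :=
  (frogKappa d1 d2) ^ 2 - 2 * (frogKappa d1 d2) * ((d1 : ℝ) + (d2 : ℝ)) * p ^ 2
    + ((d2 : ℝ) - (d1 : ℝ)) ^ 2 * p ^ 4

/-- α(p) = (κ + p²(d2−d1) − √Δ(p)) / (2 d2 (d1+1) p) for p ≠ 0, and α(0) = 0. -/
noncomputable def frogAlpha (d1 d2 : ℕ) (p : ℝ) : ℝ :=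
  if p = 0 then 0 else
    (frogKappa d1 d2 + p ^ 2 * ((d2 : ℝ) - (d1 : ℝ)) - Real.sqrt (frogDelta d1 d2 p)) /
      (2 * (d2 : ℝ) * ((d1 : ℝ) + 1) * p)

/-- β(p) = (κ + p²(d1−d2) − √Δ(p)) / (2 d1 (d2+1) p) for p ≠ 0, and β(0) = 0. -/
noncomputable def frogBeta (d1 d2 : ℕ) (p : ℝ) : ℝ :=
  if p = 0 then 0 else
    (frogKappa d1 d2 + p ^ 2 * ((d1 : ℝ) - (d2 : ℝ)) - Real.sqrt (frogDelta d1 d2 p)) /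
      (2 * (d1 : ℝ) * ((d2 : ℝ) + 1) * p)

/-- φₙ(p) = q·[α(p)β(p)(1+q(1−β(p)))]ⁿ·[1+q(1−α(p))]^{n−1}. -/
noncomputable def frogPhi (d1 d2 : ℕ) (q : ℝ) (n : ℕ) (p : ℝ) : ℝ :=
  q * (frogAlpha d1 d2 p * frogBeta d1 d2 p * (1 + q * (1 - frogBeta d1 d2 p))) ^ n *
    (1 + q * (1 - frogAlpha d1 d2 p)) ^ (n - 1)

/-- f(p) = α(p)β(p)(1+q(1−α(p)))(1+q(1−β(p))) − 1/(d1 d2). -/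
noncomputable def frogF (d1 d2 : ℕ) (q : ℝ) (p : ℝ) : ℝ :=
  frogAlpha d1 d2 p * frogBeta d1 d2 p * (1 + q * (1 - frogAlpha d1 d2 p)) *
    (1 + q * (1 - frogBeta d1 d2 p)) - 1 / ((d1 : ℝ) * (d2 : ℝ))

/-- fₙ(p) = (φₙ(p))^{1/n} − 1/(d1 d2). -/
noncomputable def frogFn (d1 d2 : ℕ) (q : ℝ) (n : ℕ) (p : ℝ) : ℝ :=
  (frogPhi d1 d2 q n p) ^ ((1 : ℝ) / (n : ℝ)) - 1 / ((d1 : ℝ) * (d2 : ℝ))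

/-- rationalized form of α -/
noncomputable def frogATil (d1 d2 : ℕ) (p : ℝ) : ℝ :=
  2 * ((d2 : ℝ) + 1) * p /
    (frogKappa d1 d2 + p ^ 2 * ((d2 : ℝ) - (d1 : ℝ)) + Real.sqrt (frogDelta d1 d2 p))

section aux
variable {d1 d2 : ℕ} (hd1 : 1 ≤ d1) (hd2 : 1 ≤ d2)

lemma frogDelta_lb (hd1 : 1 ≤ d1) (hd2 : 1 ≤ d2) {p : ℝ} (hp : p ∈ Set.Icc (0:ℝ) 1) :
    ((d1:ℝ) * (d2:ℝ) - 1)^2 ≤ frogDelta d1 d2 p := by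
  obtain ⟨hp0, hp1⟩ := hp
  have h1 : (1:ℝ) ≤ (d1:ℝ) := by exact_mod_cast hd1
  have h2 : (1:ℝ) ≤ (d2:ℝ) := by exact_mod_cast hd2
  unfold frogDelta frogKappa
  have hfac : 0 ≤ 2*(((d1:ℝ)+1)*((d2:ℝ)+1))*((d1:ℝ)+(d2:ℝ)) - ((d2:ℝ)-(d1:ℝ))^2*(1+p^2) := by
    nlinarith [mul_nonneg (show (0:ℝ) ≤ 1-p^2 by nlinarith) (sq_nonneg ((d2:ℝ)-(d1:ℝ))),
      mul_pos (by nlinarith : (0:ℝ) < (d1:ℝ)+(d2:ℝ)) (by nlinarith : (0:ℝ) < (d1:ℝ)*(d2:ℝ)+1),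
      mul_pos (by linarith : (0:ℝ) < (d1:ℝ)) (by linarith : (0:ℝ) < (d2:ℝ))]
  nlinarith [mul_nonneg (show (0:ℝ) ≤ 1-p^2 by nlinarith) hfac]

lemma frogDelta_nonneg (hd1 : 1 ≤ d1) (hd2 : 1 ≤ d2) {p : ℝ} (hp : p ∈ Set.Icc (0:ℝ) 1) :
    0 ≤ frogDelta d1 d2 p :=
  le_trans (sq_nonneg _) (frogDelta_lb hd1 hd2 hp)

lemma one_le_sqrt_frogDelta (hd1 : 1 ≤ d1) (hd2 : 1 ≤ d2) (hdd : 2 ≤ d1 * d2)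
    {p : ℝ} (hp : p ∈ Set.Icc (0:ℝ) 1) : 1 ≤ Real.sqrt (frogDelta d1 d2 p) := by
  have h : (1:ℝ) ≤ frogDelta d1 d2 p := by
    have := frogDelta_lb hd1 hd2 hp
    have h2 : (2:ℝ) ≤ (d1:ℝ) * (d2:ℝ) := by exact_mod_cast hdd
    nlinarith
  calc (1:ℝ) = Real.sqrt 1 := by simp
  _ ≤ _ := Real.sqrt_le_sqrt h

lemma frogDenom_pos (hd1 : 1 ≤ d1) (hd2 : 1 ≤ d2) {p : ℝ} (hp : p ∈ Set.Icc (0:ℝ) 1) :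
    0 < frogKappa d1 d2 + p ^ 2 * ((d2 : ℝ) - (d1 : ℝ)) + Real.sqrt (frogDelta d1 d2 p) := by
  obtain ⟨hp0, hp1⟩ := hp
  have h1 : (1:ℝ) ≤ (d1:ℝ) := by exact_mod_cast hd1
  have h2 : (1:ℝ) ≤ (d2:ℝ) := by exact_mod_cast hd2
  have hs : 0 ≤ Real.sqrt (frogDelta d1 d2 p) := Real.sqrt_nonneg _
  have hp2 : p^2 ≤ 1 := by nlinarith
  unfold frogKappa
  nlinarith [sq_nonneg p]

lemma frogAlpha_eq (hd1 : 1 ≤ d1) (hd2 : 1 ≤ d2) {p : ℝ} (hp : p ∈ Set.Icc (0:ℝ) 1) :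
    frogAlpha d1 d2 p = frogATil d1 d2 p := by
  rcases eq_or_ne p 0 with rfl | hne
  · simp [frogAlpha, frogATil]
  · have hD := frogDenom_pos hd1 hd2 hp
    have hΔ := frogDelta_nonneg hd1 hd2 hp
    have hs : Real.sqrt (frogDelta d1 d2 p) ^ 2 = frogDelta d1 d2 p := Real.sq_sqrt hΔ
    have h2 : (1:ℝ) ≤ (d2:ℝ) := by exact_mod_cast hd2
    have hden2 : (2 * (d2 : ℝ) * ((d1 : ℝ) + 1) * p) ≠ 0 := by
      have : (0:ℝ) < 2 * (d2 : ℝ) * ((d1 : ℝ) + 1) := by positivity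
      exact mul_ne_zero this.ne' hne
    rw [frogAlpha, frogATil, if_neg hne, div_eq_div_iff hden2 hD.ne']
    have hform : frogDelta d1 d2 p = (((d1:ℝ)+1)*((d2:ℝ)+1) + p ^ 2 * ((d2 : ℝ) - (d1 : ℝ)))^2
        - 4 * (((d1:ℝ)+1)*((d2:ℝ)+1)) * (d2:ℝ) * p^2 := by
      unfold frogDelta frogKappa; ring
    set s := Real.sqrt (frogDelta d1 d2 p) with hs_def
    unfold frogKappa
    linear_combination -hs - hform
lemma frogBeta_swap (d1 d2 : ℕ) : frogBeta d1 d2 = frogAlpha d2 d1 := by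
  funext p
  have hκ : frogKappa d2 d1 = frogKappa d1 d2 := by unfold frogKappa; ring
  have hΔ : frogDelta d2 d1 p = frogDelta d1 d2 p := by unfold frogDelta; rw [hκ]; ring
  unfold frogBeta frogAlpha
  rw [hκ, hΔ]

lemma frogDelta_continuous (d1 d2 : ℕ) : Continuous (frogDelta d1 d2) := by
  unfold frogDelta; continuity

lemma frogATil_continuousOn (hd1 : 1 ≤ d1) (hd2 : 1 ≤ d2) :
    ContinuousOn (frogATil d1 d2) (Set.Icc (0:ℝ) 1) := by
  apply ContinuousOn.div
  · exact (continuous_const.mul continuous_id).continuousOn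
  · exact ((continuous_const.add ((continuous_pow 2).mul continuous_const)).add
      (Real.continuous_sqrt.comp (frogDelta_continuous d1 d2))).continuousOn
  · exact fun x hx => (frogDenom_pos hd1 hd2 hx).ne'

lemma frogDelta_hasDerivAt (d1 d2 : ℕ) (x : ℝ) :
    HasDerivAt (frogDelta d1 d2)
      (-(4 * frogKappa d1 d2 * ((d1:ℝ) + (d2:ℝ))) * x + 4 * ((d2:ℝ) - (d1:ℝ))^2 * x^3) x := by
  have h2 : HasDerivAt (fun p : ℝ => p^2) (2*x) x := by simpa using hasDerivAt_pow 2 x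
  have h4 : HasDerivAt (fun p : ℝ => p^4) (4*x^3) x := by
    have := hasDerivAt_pow 4 x
    norm_num at this
    simpa using this
  have hb := ((h2.const_mul (2 * frogKappa d1 d2 * ((d1:ℝ) + (d2:ℝ)))).const_sub
      ((frogKappa d1 d2)^2)).add (h4.const_mul (((d2:ℝ) - (d1:ℝ))^2))
  have hmain : HasDerivAt (fun p : ℝ => (frogKappa d1 d2)^2
      - 2 * frogKappa d1 d2 * ((d1:ℝ) + (d2:ℝ)) * p^2 + ((d2:ℝ) - (d1:ℝ))^2 * p^4)
      (-(4 * frogKappa d1 d2 * ((d1:ℝ) + (d2:ℝ))) * x + 4 * ((d2:ℝ) - (d1:ℝ))^2 * x^3) x := by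
    rw [show (-(4 * frogKappa d1 d2 * ((d1:ℝ) + (d2:ℝ))) * x + 4 * ((d2:ℝ) - (d1:ℝ))^2 * x^3)
      = -(2 * frogKappa d1 d2 * ((d1:ℝ) + (d2:ℝ)) * (2 * x)) + ((d2:ℝ) - (d1:ℝ))^2 * (4 * x^3)
      from by ring]
    exact hb
  exact hmain

lemma frogATil_hasDerivAt (hd1 : 1 ≤ d1) (hd2 : 1 ≤ d2) (hdd : 2 ≤ d1 * d2)
    {x : ℝ} (hx : x ∈ Set.Icc (0:ℝ) 1) :
    HasDerivAt (frogATil d1 d2)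
      ((2 * ((d2:ℝ) + 1) *
          (frogKappa d1 d2 + x ^ 2 * ((d2:ℝ) - (d1:ℝ)) + Real.sqrt (frogDelta d1 d2 x)) -
        2 * ((d2:ℝ) + 1) * x *
          (2 * ((d2:ℝ) - (d1:ℝ)) * x +
            1 / (2 * Real.sqrt (frogDelta d1 d2 x)) *
              (-(4 * frogKappa d1 d2 * ((d1:ℝ) + (d2:ℝ))) * x + 4 * ((d2:ℝ) - (d1:ℝ))^2 * x^3))) /
        (frogKappa d1 d2 + x ^ 2 * ((d2:ℝ) - (d1:ℝ)) + Real.sqrt (frogDelta d1 d2 x))^2) x := by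
  have hΔpos : 0 < frogDelta d1 d2 x := by
    have := one_le_sqrt_frogDelta hd1 hd2 hdd hx
    nlinarith [Real.sq_sqrt (frogDelta_nonneg hd1 hd2 hx)]
  have hsq : HasDerivAt (fun p => Real.sqrt (frogDelta d1 d2 p))
      (1 / (2 * Real.sqrt (frogDelta d1 d2 x)) *
        (-(4 * frogKappa d1 d2 * ((d1:ℝ) + (d2:ℝ))) * x + 4 * ((d2:ℝ) - (d1:ℝ))^2 * x^3)) x :=
    (Real.hasDerivAt_sqrt hΔpos.ne').comp x (frogDelta_hasDerivAt d1 d2 x)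
  have h2 : HasDerivAt (fun p : ℝ => p^2) (2*x) x := by simpa using hasDerivAt_pow 2 x
  have hden : HasDerivAt
      (fun p => frogKappa d1 d2 + p ^ 2 * ((d2:ℝ) - (d1:ℝ)) + Real.sqrt (frogDelta d1 d2 p))
      (2 * ((d2:ℝ) - (d1:ℝ)) * x +
        1 / (2 * Real.sqrt (frogDelta d1 d2 x)) *
          (-(4 * frogKappa d1 d2 * ((d1:ℝ) + (d2:ℝ))) * x + 4 * ((d2:ℝ) - (d1:ℝ))^2 * x^3)) x := by
    have := ((h2.mul_const ((d2:ℝ) - (d1:ℝ))).const_add (frogKappa d1 d2)).add hsq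
    exact this.congr_deriv (by ring)
  have hnum : HasDerivAt (fun p : ℝ => 2 * ((d2:ℝ) + 1) * p) (2 * ((d2:ℝ) + 1)) x := by
    simpa using (hasDerivAt_id x).const_mul (2 * ((d2:ℝ) + 1))
  have := hnum.div hden (frogDenom_pos hd1 hd2 hx).ne'
  exact this

lemma frogATil_deriv_pos (hd1 : 1 ≤ d1) (hd2 : 1 ≤ d2) (hdd : 2 ≤ d1 * d2)
    {x : ℝ} (hx : x ∈ Set.Ioo (0:ℝ) 1) :
    0 < deriv (frogATil d1 d2) x := by
  have hx' : x ∈ Set.Icc (0:ℝ) 1 := ⟨hx.1.le, hx.2.le⟩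
  rw [(frogATil_hasDerivAt hd1 hd2 hdd hx').deriv]
  have hD := frogDenom_pos hd1 hd2 hx'
  apply div_pos _ (by positivity)
  set s := Real.sqrt (frogDelta d1 d2 x) with hs_def
  have hs1 : 1 ≤ s := one_le_sqrt_frogDelta hd1 hd2 hdd hx'
  have hs2 : s^2 = frogDelta d1 d2 x := Real.sq_sqrt (frogDelta_nonneg hd1 hd2 hx')
  have h1 : (1:ℝ) ≤ (d1:ℝ) := by exact_mod_cast hd1
  have h2 : (1:ℝ) ≤ (d2:ℝ) := by exact_mod_cast hd2
  obtain ⟨hx0, hx1⟩ := hx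
  have hspos : (0:ℝ) < s := by linarith
  rw [show (2 * ((d2:ℝ) + 1) *
          (frogKappa d1 d2 + x ^ 2 * ((d2:ℝ) - (d1:ℝ)) + s) -
        2 * ((d2:ℝ) + 1) * x *
          (2 * ((d2:ℝ) - (d1:ℝ)) * x +
            1 / (2 * s) *
              (-(4 * frogKappa d1 d2 * ((d1:ℝ) + (d2:ℝ))) * x + 4 * ((d2:ℝ) - (d1:ℝ))^2 * x^3)))
      = 2 * ((d2:ℝ) + 1) *
          ((s * (frogKappa d1 d2 - x^2 * ((d2:ℝ) - (d1:ℝ)) + s) +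
            (2 * frogKappa d1 d2 * ((d1:ℝ) + (d2:ℝ)) * x^2 - 2 * ((d2:ℝ) - (d1:ℝ))^2 * x^4)) / s)
    from by field_simp; ring]
  apply mul_pos (by positivity)
  apply div_pos _ hspos
  have hκ : frogKappa d1 d2 = ((d1:ℝ)+1) * ((d2:ℝ)+1) := rfl
  rw [hκ]
  have hA : 0 < s * (((d1:ℝ)+1) * ((d2:ℝ)+1) - x^2 * ((d2:ℝ) - (d1:ℝ)) + s) := by
    apply mul_pos hspos
    nlinarith [sq_nonneg x, mul_nonneg (show (0:ℝ) ≤ 1 - x^2 by nlinarith) (show (0:ℝ) ≤ (d2:ℝ) by linarith),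
      mul_nonneg (sq_nonneg x) (show (0:ℝ) ≤ (d1:ℝ) by linarith)]
  have hx24 : (0:ℝ) ≤ x^2 - x^4 := by
    nlinarith [mul_nonneg (sq_nonneg x) (show (0:ℝ) ≤ 1 - x^2 by nlinarith)]
  have hKE : (0:ℝ) ≤ ((d1:ℝ)+1)*((d2:ℝ)+1)*((d1:ℝ)+(d2:ℝ)) - ((d2:ℝ)-(d1:ℝ))^2 := by
    nlinarith [mul_pos (show (0:ℝ) < (d1:ℝ) by linarith) (show (0:ℝ) < (d2:ℝ) by linarith),
      mul_pos (show (0:ℝ) < (d1:ℝ)+(d2:ℝ) by linarith)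
        (show (0:ℝ) < (d1:ℝ)*(d2:ℝ)+1 by nlinarith)]
  have hB : 0 ≤ 2 * (((d1:ℝ)+1) * ((d2:ℝ)+1)) * ((d1:ℝ) + (d2:ℝ)) * x^2 - 2 * ((d2:ℝ) - (d1:ℝ))^2 * x^4 := by
    nlinarith [mul_nonneg hx24 (show (0:ℝ) ≤ ((d1:ℝ)+1)*((d2:ℝ)+1)*((d1:ℝ)+(d2:ℝ)) by positivity),
      mul_nonneg (show (0:ℝ) ≤ x^4 by positivity) hKE]
  linarith

lemma frogATil_strictMonoOn (hd1 : 1 ≤ d1) (hd2 : 1 ≤ d2) (hdd : 2 ≤ d1 * d2) :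
    StrictMonoOn (frogATil d1 d2) (Set.Icc (0:ℝ) 1) := by
  apply strictMonoOn_of_deriv_pos (convex_Icc 0 1) (frogATil_continuousOn hd1 hd2)
  intro x hx
  rw [interior_Icc] at hx
  exact frogATil_deriv_pos hd1 hd2 hdd hx

lemma frogATil_one (hd1 : 1 ≤ d1) (hd2 : 1 ≤ d2) :
    frogATil d1 d2 1 = ((d2:ℝ) + 1) / ((d2:ℝ) * ((d1:ℝ) + 1)) := by
  have h1 : (1:ℝ) ≤ (d1:ℝ) := by exact_mod_cast hd1
  have h2 : (1:ℝ) ≤ (d2:ℝ) := by exact_mod_cast hd2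
  have hΔ1 : frogDelta d1 d2 1 = ((d1:ℝ) * (d2:ℝ) - 1)^2 := by
    unfold frogDelta frogKappa; ring
  have hsqrt : Real.sqrt (frogDelta d1 d2 1) = (d1:ℝ) * (d2:ℝ) - 1 := by
    rw [hΔ1, Real.sqrt_sq (by nlinarith)]
  unfold frogATil frogKappa
  rw [hsqrt]
  rw [show ((d1:ℝ) + 1) * ((d2:ℝ) + 1) + (1:ℝ)^2 * ((d2:ℝ) - (d1:ℝ)) + ((d1:ℝ)*(d2:ℝ) - 1)
      = 2 * ((d2:ℝ) * ((d1:ℝ) + 1)) from by ring]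
  rw [div_eq_div_iff (by positivity) (by positivity)]
  ring

lemma frogAlpha_strictMonoOn (hd1 : 1 ≤ d1) (hd2 : 1 ≤ d2) (hdd : 2 ≤ d1 * d2) :
    StrictMonoOn (frogAlpha d1 d2) (Set.Icc (0:ℝ) 1) := by
  intro x hx y hy hxy
  rw [frogAlpha_eq hd1 hd2 hx, frogAlpha_eq hd1 hd2 hy]
  exact frogATil_strictMonoOn hd1 hd2 hdd hx hy hxy

lemma frogAlpha_continuousOn (hd1 : 1 ≤ d1) (hd2 : 1 ≤ d2) :
    ContinuousOn (frogAlpha d1 d2) (Set.Icc (0:ℝ) 1) :=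
  (frogATil_continuousOn hd1 hd2).congr fun p hp => frogAlpha_eq hd1 hd2 hp

lemma frogAlpha_zero (d1 d2 : ℕ) : frogAlpha d1 d2 0 = 0 := by simp [frogAlpha]

lemma frogAlpha_one (hd1 : 1 ≤ d1) (hd2 : 1 ≤ d2) :
    frogAlpha d1 d2 1 = ((d2:ℝ) + 1) / ((d2:ℝ) * ((d1:ℝ) + 1)) := by
  rw [frogAlpha_eq hd1 hd2 (by norm_num : (1:ℝ) ∈ Set.Icc (0:ℝ) 1), frogATil_one hd1 hd2]

lemma frogAlpha_nonneg (hd1 : 1 ≤ d1) (hd2 : 1 ≤ d2) (hdd : 2 ≤ d1 * d2)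
    {p : ℝ} (hp : p ∈ Set.Icc (0:ℝ) 1) : 0 ≤ frogAlpha d1 d2 p := by
  have := (frogAlpha_strictMonoOn hd1 hd2 hdd).monotoneOn
    (Set.left_mem_Icc.2 (by norm_num)) hp hp.1
  rwa [frogAlpha_zero] at this

lemma frogAlpha_le_one (hd1 : 1 ≤ d1) (hd2 : 1 ≤ d2) (hdd : 2 ≤ d1 * d2)
    {p : ℝ} (hp : p ∈ Set.Icc (0:ℝ) 1) : frogAlpha d1 d2 p ≤ 1 := by
  have h1 : (1:ℝ) ≤ (d1:ℝ) := by exact_mod_cast hd1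
  have h2 : (1:ℝ) ≤ (d2:ℝ) := by exact_mod_cast hd2
  have hle := (frogAlpha_strictMonoOn hd1 hd2 hdd).monotoneOn hp
    (Set.right_mem_Icc.2 (by norm_num)) hp.2
  rw [frogAlpha_one hd1 hd2] at hle
  refine le_trans hle ?_
  rw [div_le_one (by positivity)]
  nlinarith

end aux

noncomputable def frogA (d1 d2 : ℕ) (q p : ℝ) : ℝ :=
  frogAlpha d1 d2 p * frogBeta d1 d2 p * (1 + q * (1 - frogBeta d1 d2 p))

noncomputable def frogG (d1 d2 : ℕ) (q p : ℝ) : ℝ :=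
  frogAlpha d1 d2 p * frogBeta d1 d2 p * (1 + q * (1 - frogAlpha d1 d2 p)) *
    (1 + q * (1 - frogBeta d1 d2 p))

lemma frogPhi_eq (d1 d2 : ℕ) (q p : ℝ) {n : ℕ} (hn : 1 ≤ n) :
    frogPhi d1 d2 q n p = q * frogA d1 d2 q p * (frogG d1 d2 q p) ^ (n - 1) := by
  obtain ⟨m, rfl⟩ : ∃ m, n = m + 1 := ⟨n - 1, (Nat.succ_pred_eq_of_pos hn).symm⟩
  simp only [Nat.add_sub_cancel]
  rw [show frogPhi d1 d2 q (m+1) p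
        = q * frogA d1 d2 q p ^ (m+1) * (1 + q * (1 - frogAlpha d1 d2 p)) ^ m from rfl,
      show frogG d1 d2 q p = frogA d1 d2 q p * (1 + q * (1 - frogAlpha d1 d2 p)) from by
        unfold frogG frogA; ring,
      mul_pow, pow_succ]
  ring

lemma frogF_eq (d1 d2 : ℕ) (q p : ℝ) :
    frogF d1 d2 q p = frogG d1 d2 q p - 1 / ((d1:ℝ) * (d2:ℝ)) := by
  unfold frogF frogG; ring

lemma frog_tendsto_aux {P G : ℝ} (hP : 0 < P) (hG : 0 < G) :
    Filter.Tendsto (fun n : ℕ => (P * G ^ (n - 1)) ^ ((1:ℝ)/(n:ℝ)))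
      Filter.atTop (nhds G) := by
  have h1 : Filter.Tendsto (fun n : ℕ => (1:ℝ)/(n:ℝ)) Filter.atTop (nhds 0) :=
    tendsto_one_div_atTop_nhds_zero_nat
  have hPc : Filter.Tendsto (fun n : ℕ => P ^ ((1:ℝ)/(n:ℝ))) Filter.atTop (nhds 1) := by
    have := (Real.continuousAt_const_rpow (b := (0:ℝ)) hP.ne').tendsto.comp h1
    simpa [Real.rpow_zero, Function.comp_def] using this
  have hGc : Filter.Tendsto (fun n : ℕ => G ^ (1 - (1:ℝ)/(n:ℝ))) Filter.atTop (nhds G) := by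
    have hsub : Filter.Tendsto (fun n : ℕ => 1 - (1:ℝ)/(n:ℝ)) Filter.atTop (nhds 1) := by
      simpa using tendsto_const_nhds.sub h1
    have := (Real.continuousAt_const_rpow (b := (1:ℝ)) hG.ne').tendsto.comp hsub
    simpa [Real.rpow_one, Function.comp_def] using this
  have heq : ∀ᶠ n : ℕ in Filter.atTop,
      P ^ ((1:ℝ)/(n:ℝ)) * G ^ (1 - (1:ℝ)/(n:ℝ)) = (P * G ^ (n - 1)) ^ ((1:ℝ)/(n:ℝ)) := by
    filter_upwards [Filter.eventually_ge_atTop 1] with n hn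
    have hn0 : (0:ℝ) < (n:ℝ) := by exact_mod_cast hn
    rw [Real.mul_rpow hP.le (pow_nonneg hG.le _), ← Real.rpow_natCast G (n - 1),
      ← Real.rpow_mul hG.le]
    congr 1
    rw [Nat.cast_sub hn, Nat.cast_one]
    field_simp
  exact Filter.Tendsto.congr' heq (by simpa using hPc.mul hGc)

set_option maxHeartbeats 1000000 in
/-- For d1, d2 ≥ 1 with d1 ≥ 2 or d2 ≥ 2 and q ∈ (0,1]: there is N such that for every
n ≥ N the function fₙ is continuous and strictly increasing on [0,1] with
fₙ(0) < 0 < fₙ(1), hence has a unique root p̃ₙ ∈ (0,1); and the sequence (p̃ₙ)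
converges to the unique root p̃ ∈ (0,1) of f. -/
theorem frogFn_roots_converge (d1 d2 : ℕ) (hd1 : 1 ≤ d1) (hd2 : 1 ≤ d2)
    (hd : 2 ≤ d1 ∨ 2 ≤ d2) (q : ℝ) (hq : q ∈ Set.Ioc (0 : ℝ) 1) :
    ∃ (N : ℕ) (pt : ℕ → ℝ) (ps : ℝ),
      (∀ n, N ≤ n →
        ContinuousOn (frogFn d1 d2 q n) (Set.Icc (0 : ℝ) 1) ∧
        StrictMonoOn (frogFn d1 d2 q n) (Set.Icc (0 : ℝ) 1) ∧
        frogFn d1 d2 q n 0 < 0 ∧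
        0 < frogFn d1 d2 q n 1 ∧
        pt n ∈ Set.Ioo (0 : ℝ) 1 ∧
        frogFn d1 d2 q n (pt n) = 0 ∧
        (∀ x ∈ Set.Ioo (0 : ℝ) 1, frogFn d1 d2 q n x = 0 → x = pt n)) ∧
      ps ∈ Set.Ioo (0 : ℝ) 1 ∧
      frogF d1 d2 q ps = 0 ∧
      (∀ x ∈ Set.Ioo (0 : ℝ) 1, frogF d1 d2 q x = 0 → x = ps) ∧
      Filter.Tendsto pt Filter.atTop (nhds ps) := by
  obtain ⟨hq0, hq1⟩ := hq
  have hdd : 2 ≤ d1 * d2 := by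
    rcases hd with h | h
    · calc 2 ≤ d1 := h
        _ = d1 * 1 := (mul_one d1).symm
        _ ≤ d1 * d2 := Nat.mul_le_mul_left d1 hd2
    · calc 2 ≤ d2 := h
        _ = 1 * d2 := (one_mul d2).symm
        _ ≤ d1 * d2 := Nat.mul_le_mul_right d2 hd1
  have hdd' : 2 ≤ d2 * d1 := by rwa [Nat.mul_comm]
  have h1 : (1:ℝ) ≤ (d1:ℝ) := by exact_mod_cast hd1
  have h2 : (1:ℝ) ≤ (d2:ℝ) := by exact_mod_cast hd2
  have h12 : (2:ℝ) ≤ (d1:ℝ) * (d2:ℝ) := by exact_mod_cast hdd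
  have hcpos : 0 < 1 / ((d1:ℝ) * (d2:ℝ)) := by positivity
  have h0I : (0:ℝ) ∈ Set.Icc (0:ℝ) 1 := Set.left_mem_Icc.2 zero_le_one
  have h1I : (1:ℝ) ∈ Set.Icc (0:ℝ) 1 := Set.right_mem_Icc.2 zero_le_one
  -- basic α and β facts
  have hαm := frogAlpha_strictMonoOn hd1 hd2 hdd
  have hαc := frogAlpha_continuousOn hd1 hd2
  have hα0 := frogAlpha_zero d1 d2
  have hβswap := frogBeta_swap d1 d2
  have hβm : StrictMonoOn (frogBeta d1 d2) (Set.Icc (0:ℝ) 1) := by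
    rw [hβswap]; exact frogAlpha_strictMonoOn hd2 hd1 hdd'
  have hβc : ContinuousOn (frogBeta d1 d2) (Set.Icc (0:ℝ) 1) := by
    rw [hβswap]; exact frogAlpha_continuousOn hd2 hd1
  have hβ0 : frogBeta d1 d2 0 = 0 := by rw [hβswap]; exact frogAlpha_zero d2 d1
  have hαnn : ∀ p ∈ Set.Icc (0:ℝ) 1, 0 ≤ frogAlpha d1 d2 p :=
    fun p hp => frogAlpha_nonneg hd1 hd2 hdd hp
  have hβnn : ∀ p ∈ Set.Icc (0:ℝ) 1, 0 ≤ frogBeta d1 d2 p := fun p hp => by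
    rw [hβswap]; exact frogAlpha_nonneg hd2 hd1 hdd' hp
  have hαle : ∀ p ∈ Set.Icc (0:ℝ) 1, frogAlpha d1 d2 p ≤ 1 :=
    fun p hp => frogAlpha_le_one hd1 hd2 hdd hp
  have hβle : ∀ p ∈ Set.Icc (0:ℝ) 1, frogBeta d1 d2 p ≤ 1 := fun p hp => by
    rw [hβswap]; exact frogAlpha_le_one hd2 hd1 hdd' hp
  -- the elementary strict monotonicity of y ↦ y(1+q(1-y)) on [0,1]
  have hu : ∀ y z : ℝ, 0 ≤ y → y < z → z ≤ 1 → y*(1+q*(1-y)) < z*(1+q*(1-z)) := by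
    intro y z hy hyz hz1
    have hfac : 0 < 1 + q - q*(y+z) := by nlinarith
    nlinarith [mul_pos (sub_pos.2 hyz) hfac]
  have hunn : ∀ y : ℝ, 0 ≤ y → y ≤ 1 → 0 ≤ y*(1+q*(1-y)) := by
    intro y hy hy1
    have : 0 ≤ 1 + q*(1-y) := by nlinarith
    exact mul_nonneg hy this
  -- G facts
  have hGfac : ∀ p, frogG d1 d2 q p
      = (frogAlpha d1 d2 p * (1 + q*(1 - frogAlpha d1 d2 p))) *
        (frogBeta d1 d2 p * (1 + q*(1 - frogBeta d1 d2 p))) := fun p => by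
    unfold frogG; ring
  have hAfac : ∀ p, frogA d1 d2 q p
      = frogAlpha d1 d2 p * (frogBeta d1 d2 p * (1 + q*(1 - frogBeta d1 d2 p))) := fun p => by
    unfold frogA; ring
  have hGm : StrictMonoOn (frogG d1 d2 q) (Set.Icc (0:ℝ) 1) := by
    intro x hx y hy hxy
    rw [hGfac, hGfac]
    exact mul_lt_mul'' (hu _ _ (hαnn x hx) (hαm hx hy hxy) (hαle y hy))
      (hu _ _ (hβnn x hx) (hβm hx hy hxy) (hβle y hy))
      (hunn _ (hαnn x hx) (hαle x hx)) (hunn _ (hβnn x hx) (hβle x hx))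
  have hAm : StrictMonoOn (frogA d1 d2 q) (Set.Icc (0:ℝ) 1) := by
    intro x hx y hy hxy
    rw [hAfac, hAfac]
    exact mul_lt_mul'' (hαm hx hy hxy) (hu _ _ (hβnn x hx) (hβm hx hy hxy) (hβle y hy))
      (hαnn x hx) (hunn _ (hβnn x hx) (hβle x hx))
  have hG0 : frogG d1 d2 q 0 = 0 := by rw [hGfac, hα0, hβ0]; ring
  have hA0 : frogA d1 d2 q 0 = 0 := by rw [hAfac, hα0]; ring
  have hGpos : ∀ p ∈ Set.Icc (0:ℝ) 1, 0 < p → 0 < frogG d1 d2 q p := fun p hp hp0 => by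
    have := hGm h0I hp hp0; rwa [hG0] at this
  have hApos : ∀ p ∈ Set.Icc (0:ℝ) 1, 0 < p → 0 < frogA d1 d2 q p := fun p hp hp0 => by
    have := hAm h0I hp hp0; rwa [hA0] at this
  have hGnn : ∀ p ∈ Set.Icc (0:ℝ) 1, 0 ≤ frogG d1 d2 q p := fun p hp => by
    have := hGm.monotoneOn h0I hp hp.1; rwa [hG0] at this
  have hAnn : ∀ p ∈ Set.Icc (0:ℝ) 1, 0 ≤ frogA d1 d2 q p := fun p hp => by
    have := hAm.monotoneOn h0I hp hp.1; rwa [hA0] at this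
  have hGc : ContinuousOn (frogG d1 d2 q) (Set.Icc (0:ℝ) 1) := by
    have : ContinuousOn (fun p => frogAlpha d1 d2 p * frogBeta d1 d2 p *
        (1 + q * (1 - frogAlpha d1 d2 p)) * (1 + q * (1 - frogBeta d1 d2 p)))
        (Set.Icc (0:ℝ) 1) :=
      (((hαc.mul hβc).mul (continuousOn_const.add
        (continuousOn_const.mul (continuousOn_const.sub hαc)))).mul
        (continuousOn_const.add (continuousOn_const.mul (continuousOn_const.sub hβc))))
    exact this
  -- value at 1
  have hα1 := frogAlpha_one hd1 hd2
  have hβ1 : frogBeta d1 d2 1 = ((d1:ℝ)+1)/((d1:ℝ)*((d2:ℝ)+1)) := by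
    rw [hβswap]; exact frogAlpha_one hd2 hd1
  have hG1 : 1 / ((d1:ℝ) * (d2:ℝ)) < frogG d1 d2 q 1 := by
    rw [hGfac, hα1, hβ1]
    have ha1pos : (0:ℝ) < ((d2:ℝ)+1)/((d2:ℝ)*((d1:ℝ)+1)) := by positivity
    have hb1pos : (0:ℝ) < ((d1:ℝ)+1)/((d1:ℝ)*((d2:ℝ)+1)) := by positivity
    have ha1lt : ((d2:ℝ)+1)/((d2:ℝ)*((d1:ℝ)+1)) < 1 := by
      rw [div_lt_one (by positivity)]; nlinarith
    have hb1le : ((d1:ℝ)+1)/((d1:ℝ)*((d2:ℝ)+1)) ≤ 1 := by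
      rw [div_le_one (by positivity)]; nlinarith
    have habc : (((d2:ℝ)+1)/((d2:ℝ)*((d1:ℝ)+1))) * (((d1:ℝ)+1)/((d1:ℝ)*((d2:ℝ)+1)))
        = 1 / ((d1:ℝ) * (d2:ℝ)) := by
      field_simp
    have e1 : 1 < 1 + q*(1-((d2:ℝ)+1)/((d2:ℝ)*((d1:ℝ)+1))) := by nlinarith
    have e2 : 1 ≤ 1 + q*(1-((d1:ℝ)+1)/((d1:ℝ)*((d2:ℝ)+1))) := by nlinarith
    calc 1 / ((d1:ℝ) * (d2:ℝ))
        = ((((d2:ℝ)+1)/((d2:ℝ)*((d1:ℝ)+1))) * (((d1:ℝ)+1)/((d1:ℝ)*((d2:ℝ)+1)))) * 1 := by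
          rw [habc, mul_one]
      _ < ((((d2:ℝ)+1)/((d2:ℝ)*((d1:ℝ)+1))) * (((d1:ℝ)+1)/((d1:ℝ)*((d2:ℝ)+1)))) *
          ((1 + q*(1-((d2:ℝ)+1)/((d2:ℝ)*((d1:ℝ)+1)))) *
           (1 + q*(1-((d1:ℝ)+1)/((d1:ℝ)*((d2:ℝ)+1))))) := by
          apply mul_lt_mul_of_pos_left _ (by positivity)
          exact one_lt_mul_of_lt_of_le e1 e2
      _ = (((d2:ℝ)+1)/((d2:ℝ)*((d1:ℝ)+1)) * (1 + q*(1-((d2:ℝ)+1)/((d2:ℝ)*((d1:ℝ)+1))))) *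
          (((d1:ℝ)+1)/((d1:ℝ)*((d2:ℝ)+1)) * (1 + q*(1-((d1:ℝ)+1)/((d1:ℝ)*((d2:ℝ)+1))))) := by
          ring
  -- f facts
  have hFeq : ∀ p, frogF d1 d2 q p = frogG d1 d2 q p - 1/((d1:ℝ)*(d2:ℝ)) :=
    fun p => frogF_eq d1 d2 q p
  have hFc : ContinuousOn (frogF d1 d2 q) (Set.Icc (0:ℝ) 1) :=
    (hGc.sub continuousOn_const).congr fun p _ => hFeq p
  have hFm : StrictMonoOn (frogF d1 d2 q) (Set.Icc (0:ℝ) 1) := by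
    intro x hx y hy hxy
    rw [hFeq, hFeq]
    have := hGm hx hy hxy
    linarith
  have hF0 : frogF d1 d2 q 0 < 0 := by rw [hFeq, hG0]; linarith
  have hF1 : 0 < frogF d1 d2 q 1 := by rw [hFeq]; linarith
  -- the root of f
  obtain ⟨ps, hpsI, hpsroot⟩ := intermediate_value_Icc zero_le_one hFc ⟨hF0.le, hF1.le⟩
  have hps0 : 0 < ps := by
    refine lt_of_le_of_ne hpsI.1 fun h => ?_
    have hcopy := hpsroot
    rw [← h] at hcopy
    linarith
  have hps1 : ps < 1 := by
    refine lt_of_le_of_ne hpsI.2 fun h => ?_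
    have hcopy := hpsroot
    rw [h] at hcopy
    linarith
  have hGps : frogG d1 d2 q ps = 1/((d1:ℝ)*(d2:ℝ)) := by
    have := hFeq ps; rw [hpsroot] at this; linarith
  -- choice of N
  have hG1pos : 0 < frogG d1 d2 q 1 := lt_trans hcpos hG1
  have hA1pos : 0 < frogA d1 d2 q 1 := hApos 1 h1I one_pos
  have hr1 : 1/((d1:ℝ)*(d2:ℝ)) / frogG d1 d2 q 1 < 1 := (div_lt_one hG1pos).2 hG1
  have hr0 : 0 ≤ 1/((d1:ℝ)*(d2:ℝ)) / frogG d1 d2 q 1 := (div_pos hcpos hG1pos).le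
  have hqA1 : 0 < q * frogA d1 d2 q 1 / frogG d1 d2 q 1 :=
    div_pos (mul_pos hq0 hA1pos) hG1pos
  have htendr := tendsto_pow_atTop_nhds_zero_of_lt_one hr0 hr1
  obtain ⟨N0, hN0⟩ := Filter.eventually_atTop.1
    ((tendsto_order.1 htendr).2 _ hqA1)
  set N := max N0 1 with hN
  have hNn1 : ∀ {n : ℕ}, N ≤ n → 1 ≤ n := fun hn => le_trans (le_max_right N0 1) hn
  -- formula for fₙ
  have hfn_eq : ∀ {n : ℕ}, 1 ≤ n → ∀ p, frogFn d1 d2 q n p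
      = (q * frogA d1 d2 q p * frogG d1 d2 q p ^ (n-1)) ^ ((1:ℝ)/(n:ℝ))
        - 1/((d1:ℝ)*(d2:ℝ)) := by
    intro n hn p
    unfold frogFn
    rw [frogPhi_eq d1 d2 q p hn]
  -- continuity of fₙ
  have hFnC : ∀ n : ℕ, ContinuousOn (frogFn d1 d2 q n) (Set.Icc (0:ℝ) 1) := by
    intro n
    have hphi : ContinuousOn (frogPhi d1 d2 q n) (Set.Icc (0:ℝ) 1) := by
      have : ContinuousOn (fun p => q * (frogAlpha d1 d2 p * frogBeta d1 d2 p *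
          (1 + q * (1 - frogBeta d1 d2 p))) ^ n *
          (1 + q * (1 - frogAlpha d1 d2 p)) ^ (n-1)) (Set.Icc (0:ℝ) 1) :=
        ((continuousOn_const.mul (((hαc.mul hβc).mul (continuousOn_const.add
          (continuousOn_const.mul (continuousOn_const.sub hβc)))).pow n)).mul
          ((continuousOn_const.add
            (continuousOn_const.mul (continuousOn_const.sub hαc))).pow (n-1)))
      exact this
    have : ContinuousOn (fun p => (frogPhi d1 d2 q n p) ^ ((1:ℝ)/(n:ℝ))
        - 1/((d1:ℝ)*(d2:ℝ))) (Set.Icc (0:ℝ) 1) :=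
      (hphi.rpow_const fun x _ => Or.inr (by positivity)).sub continuousOn_const
    exact this
  -- strict monotonicity of fₙ
  have hFnM : ∀ {n : ℕ}, 1 ≤ n → StrictMonoOn (frogFn d1 d2 q n) (Set.Icc (0:ℝ) 1) := by
    intro n hn x hx y hy hxy
    have hnR : (0:ℝ) < (1:ℝ)/(n:ℝ) := by
      have : (0:ℝ) < (n:ℝ) := by exact_mod_cast hn
      positivity
    rw [hfn_eq hn x, hfn_eq hn y]
    have hy0 : 0 < y := lt_of_le_of_lt hx.1 hxy
    have hφx : 0 ≤ q * frogA d1 d2 q x * frogG d1 d2 q x ^ (n-1) :=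
      mul_nonneg (mul_nonneg hq0.le (hAnn x hx)) (pow_nonneg (hGnn x hx) _)
    have hφxy : q * frogA d1 d2 q x * frogG d1 d2 q x ^ (n-1)
        < q * frogA d1 d2 q y * frogG d1 d2 q y ^ (n-1) := by
      have hstep1 : frogA d1 d2 q x * frogG d1 d2 q x ^ (n-1)
          ≤ frogA d1 d2 q x * frogG d1 d2 q y ^ (n-1) :=
        mul_le_mul_of_nonneg_left
          (pow_le_pow_left₀ (hGnn x hx) (hGm.monotoneOn hx hy hxy.le) _) (hAnn x hx)
      have hstep2 : frogA d1 d2 q x * frogG d1 d2 q y ^ (n-1)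
          < frogA d1 d2 q y * frogG d1 d2 q y ^ (n-1) :=
        mul_lt_mul_of_pos_right (hAm hx hy hxy) (pow_pos (hGpos y hy hy0) _)
      rw [mul_assoc, mul_assoc]
      exact mul_lt_mul_of_pos_left (lt_of_le_of_lt hstep1 hstep2) hq0
    have := Real.rpow_lt_rpow hφx hφxy hnR
    linarith
  -- fₙ 0 < 0
  have hFn0 : ∀ {n : ℕ}, 1 ≤ n → frogFn d1 d2 q n 0 < 0 := by
    intro n hn
    have hnR : (1:ℝ)/(n:ℝ) ≠ 0 := by
      have : (0:ℝ) < (n:ℝ) := by exact_mod_cast hn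
      positivity
    rw [hfn_eq hn 0]
    rw [show q * frogA d1 d2 q 0 * frogG d1 d2 q 0 ^ (n-1) = 0 from by rw [hA0]; ring]
    rw [Real.zero_rpow hnR]
    linarith
  -- 0 < fₙ 1
  have hFn1 : ∀ {n : ℕ}, N ≤ n → 0 < frogFn d1 d2 q n 1 := by
    intro n hn
    have hn1 : 1 ≤ n := hNn1 hn
    have hnR0 : (0:ℝ) < (n:ℝ) := by exact_mod_cast hn1
    rw [hfn_eq hn1 1]
    have hkey := hN0 n (le_trans (le_max_left N0 1) hn)
    rw [div_pow, div_lt_div_iff₀ (pow_pos hG1pos n) hG1pos] at hkey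
    have hsplit : frogG d1 d2 q 1 ^ n = frogG d1 d2 q 1 ^ (n-1) * frogG d1 d2 q 1 := by
      rw [← pow_succ]
      congr 1
      omega
    rw [hsplit] at hkey
    have hφpos : (1/((d1:ℝ)*(d2:ℝ))) ^ n < q * frogA d1 d2 q 1 * frogG d1 d2 q 1 ^ (n-1) := by
      rw [show q * frogA d1 d2 q 1 * (frogG d1 d2 q 1 ^ (n-1) * frogG d1 d2 q 1)
          = q * frogA d1 d2 q 1 * frogG d1 d2 q 1 ^ (n-1) * frogG d1 d2 q 1 from by
            ring] at hkey
      exact lt_of_mul_lt_mul_right hkey hG1pos.le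
    have hcn : 1/((d1:ℝ)*(d2:ℝ)) = ((1/((d1:ℝ)*(d2:ℝ))) ^ n) ^ ((1:ℝ)/(n:ℝ)) := by
      rw [← Real.rpow_natCast (1/((d1:ℝ)*(d2:ℝ))) n, ← Real.rpow_mul hcpos.le,
        mul_one_div, div_self hnR0.ne', Real.rpow_one]
    have := Real.rpow_lt_rpow (by positivity) hφpos (by positivity : (0:ℝ) < 1/(n:ℝ))
    rw [← hcn] at this
    linarith
  -- roots of fₙ
  have hroot : ∀ n : ℕ, N ≤ n → ∃ x, x ∈ Set.Ioo (0:ℝ) 1 ∧ frogFn d1 d2 q n x = 0 := by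
    intro n hn
    have hn1 : 1 ≤ n := hNn1 hn
    obtain ⟨x, hxI, hx0⟩ := intermediate_value_Icc zero_le_one (hFnC n)
      ⟨(hFn0 hn1).le, (hFn1 hn).le⟩
    refine ⟨x, ⟨?_, ?_⟩, hx0⟩
    · refine lt_of_le_of_ne hxI.1 fun h => ?_
      have hcopy := hx0
      rw [← h] at hcopy
      have := hFn0 hn1
      linarith
    · refine lt_of_le_of_ne hxI.2 fun h => ?_
      have hcopy := hx0
      rw [h] at hcopy
      have := hFn1 hn
      linarith
  have hroot' : ∀ n : ℕ, ∃ x, N ≤ n → x ∈ Set.Ioo (0:ℝ) 1 ∧ frogFn d1 d2 q n x = 0 := by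
    intro n
    by_cases h : N ≤ n
    · obtain ⟨x, hx1, hx2⟩ := hroot n h
      exact ⟨x, fun _ => ⟨hx1, hx2⟩⟩
    · exact ⟨ps, fun hc => absurd hc h⟩
  choose pt hpt using hroot'
  refine ⟨N, pt, ps, ?_, ⟨hps0, hps1⟩, hpsroot, ?_, ?_⟩
  · intro n hn
    have hn1 : 1 ≤ n := hNn1 hn
    obtain ⟨hIoo, hzero⟩ := hpt n hn
    refine ⟨hFnC n, hFnM hn1, hFn0 hn1, hFn1 hn, hIoo, hzero, ?_⟩
    intro x hx hx0
    exact (hFnM hn1).injOn ⟨hx.1.le, hx.2.le⟩ ⟨hIoo.1.le, hIoo.2.le⟩ (hx0.trans hzero.symm)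
  · intro x hx hx0
    exact hFm.injOn ⟨hx.1.le, hx.2.le⟩ hpsI (hx0.trans hpsroot.symm)
  · refine tendsto_order.2 ⟨?_, ?_⟩
    · intro b hb
      rcases le_or_gt b 0 with hb0 | hb0
      · filter_upwards [Filter.eventually_ge_atTop N] with n hn
        exact lt_of_le_of_lt hb0 (hpt n hn).1.1
      · have hbI : b ∈ Set.Icc (0:ℝ) 1 := ⟨hb0.le, (lt_trans hb hps1).le⟩
        have hGb : frogG d1 d2 q b < 1/((d1:ℝ)*(d2:ℝ)) := by
          rw [← hGps]; exact hGm hbI hpsI hb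
        have htb := frog_tendsto_aux (mul_pos hq0 (hApos b hbI hb0)) (hGpos b hbI hb0)
        have hev := (tendsto_order.1 htb).2 _ hGb
        filter_upwards [hev, Filter.eventually_ge_atTop N] with n h1n h2n
        have hn1 : 1 ≤ n := hNn1 h2n
        have hfb : frogFn d1 d2 q n b < 0 := by
          rw [hfn_eq hn1 b]
          linarith
        by_contra hle
        push_neg at hle
        have hmem := (hpt n h2n).1
        have := (hFnM hn1).monotoneOn ⟨hmem.1.le, hmem.2.le⟩ hbI hle
        linarith [(hpt n h2n).2]
    · intro b hb
      rcases le_or_gt 1 b with hb1 | hb1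
      · filter_upwards [Filter.eventually_ge_atTop N] with n hn
        exact lt_of_lt_of_le (hpt n hn).1.2 hb1
      · have hb0 : 0 < b := lt_trans hps0 hb
        have hbI : b ∈ Set.Icc (0:ℝ) 1 := ⟨hb0.le, hb1.le⟩
        have hGb : 1/((d1:ℝ)*(d2:ℝ)) < frogG d1 d2 q b := by
          rw [← hGps]; exact hGm hpsI hbI hb
        have htb := frog_tendsto_aux (mul_pos hq0 (hApos b hbI hb0)) (hGpos b hbI hb0)
        have hev := (tendsto_order.1 htb).1 _ hGb
        filter_upwards [hev, Filter.eventually_ge_atTop N] with n h1n h2n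
        have hn1 : 1 ≤ n := hNn1 h2n
        have hfb : 0 < frogFn d1 d2 q n b := by
          rw [hfn_eq hn1 b]
          linarith
        by_contra hle
        push_neg at hle
        have hmem := (hpt n h2n).1
        have := (hFnM hn1).monotoneOn hbI ⟨hmem.1.le, hmem.2.le⟩ hle
        linarith [(hpt n h2n).2]
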